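/- Let n ≥ 1, let p, q : ℝⁿ × ℝ → ℝ be bounded measurable functions with 2n/(n+2) < p⁻ := inf p ≤ sup p =: p⁺ < ∞ and 1 < q⁻ := inf q ≤ sup q =: q⁺ < ∞, and let d be a fixed exponent with 2n/((n+2)p⁻) < d < min{ 2/p⁺, 1 }. Let α > 1, c_p > 1, c_q > 1, let z̄ = (x̄, t̄) ∈ ℝⁿ × ℝ and r > 0, and let F = { Q_{ρ_j}^{α_j}(z_j) }_{j ∈ J} be any family of intrinsic parabolic cylinders, all contained in Q_{2r}(z̄) := B_{2r}(x̄) × (t̄ − 4r², t̄ + 4r²), where ρ_j > 0 and α_j := α^{ q⁻_{Q_{4r}(z̄)} / q(z_j) } with q⁻_{Q_{4r}(z̄)} := inf of q over Q_{4r}(z̄) := B_{4r}(x̄) × (t̄ − 16r², t̄ + 16r²). Assume that for every j ∈ J: α_j^{ (sup of p over Q_{ρ_j}^{α_j}(z_j)) − (inf of p over Q_{ρ_j}^{α_j}(z_j)) } ≤ c_p and α_j^{ (sup of q over Q_{ρ_j}^{α_j}(z_j)) − (inf of q over Q_{ρ_j}^{α_j}(z_j)) } ≤ c_q. Then there exist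 a constant χ ≥ 1 depending only on n, c_p, c_q, p⁻, p⁺, q⁻, q⁺ and d, and a countable subset I ⊂ J, such that the cylinders { Q_{ρ_i}^{α_i}(z_i) }_{i ∈ I} are pairwise disjoint and ⋃_{j ∈ J} Q_{ρ_j}^{α_j}(z_j) ⊂ ⋃_{i ∈ I} Q_{χ ρ_i}^{α_i}(z_i). -/

import Mathlib

open MeasureTheory Metric Set

/-- The intrinsic parabolic cylinder
`Q_ρ^λ(z) = B(x, λ^{d/2 − 1/p(z)} ρ) × (t − λ^{d−1} ρ², t + λ^{d−1} ρ²)`. -/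
noncomputable def intrinsicCyl (n : ℕ) (p : EuclideanSpace ℝ (Fin n) × ℝ → ℝ)
    (d lam ρ : ℝ) (z : EuclideanSpace ℝ (Fin n) × ℝ) :
    Set (EuclideanSpace ℝ (Fin n) × ℝ) :=
  (Metric.ball z.1 (lam ^ (d/2 - 1/(p z)) * ρ)) ×ˢ
    (Set.Ioo (z.2 - lam ^ (d - 1) * ρ ^ 2) (z.2 + lam ^ (d - 1) * ρ ^ 2))

/-- Auxiliary: if `1/A ≤ x ≤ A` with `A ≥ 1` and `|e| ≤ E`, then `x ^ e ≤ A ^ E`. -/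
lemma rpow_ratio_le {x A e E : ℝ} (hx : 0 < x) (hA : 1 ≤ A) (h1 : x ≤ A) (h2 : x⁻¹ ≤ A)
    (hE : |e| ≤ E) : x ^ e ≤ A ^ E := by
  have key : x ^ e ≤ A ^ |e| := by
    rcases le_or_gt 1 x with h | h
    · calc x ^ e ≤ x ^ |e| := Real.rpow_le_rpow_of_exponent_le h (le_abs_self e)
        _ ≤ A ^ |e| := Real.rpow_le_rpow hx.le h1 (abs_nonneg e)
    · calc x ^ e ≤ x ^ (-|e|) := Real.rpow_le_rpow_of_exponent_ge hx h.le (neg_abs_le e)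
        _ = (x⁻¹) ^ |e| := by rw [Real.rpow_neg hx.le, ← Real.inv_rpow hx.le]
        _ ≤ A ^ |e| := Real.rpow_le_rpow (inv_nonneg.2 hx.le) h2 (abs_nonneg e)
  exact key.trans (Real.rpow_le_rpow_of_exponent_le hA hE)

set_option maxHeartbeats 2000000 in
/-- **Vitali-type covering lemma for intrinsic parabolic cylinders.**
Given exponents `p, q` with `2n/(n+2) < p⁻ ≤ p ≤ p⁺ < ∞`, `1 < q⁻ ≤ q ≤ q⁺ < ∞`, a scaling
parameter `d` with `2n/((n+2)p⁻) < d < min{2/p⁺, 1}`, constants `α, c_p, c_q > 1`, and a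
family `{Q_{ρ_j}^{α_j}(z_j)}_{j∈J} ⊆ Q_{2r}(z̄)` of intrinsic cylinders with
`α_j = α^{q⁻_{Q_{4r}(z̄)}/q(z_j)}` satisfying `α_j^{osc_{Q_j} p} ≤ c_p` and
`α_j^{osc_{Q_j} q} ≤ c_q`, there exist `χ = χ(n, c_p, c_q, p±, q±, d) ≥ 1` and a countable
subfamily of pairwise disjoint cylinders whose `χ`-dilates cover the whole family. -/
theorem stmt10 (n : ℕ) (hn : 1 ≤ n)
    (pm pM qm qM d cp cq : ℝ)
    (hpm : 2 * (n : ℝ) / ((n : ℝ) + 2) < pm) (hpmM : pm ≤ pM)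
    (hqm : 1 < qm) (hqmM : qm ≤ qM)
    (hd1 : 2 * (n : ℝ) / (((n : ℝ) + 2) * pm) < d) (hd2 : d < min (2 / pM) 1)
    (hcp : 1 < cp) (hcq : 1 < cq) :
    ∃ χ : ℝ, 1 ≤ χ ∧
      ∀ p q : EuclideanSpace ℝ (Fin n) × ℝ → ℝ,
        (∀ z, pm ≤ p z ∧ p z ≤ pM) → (∀ z, qm ≤ q z ∧ q z ≤ qM) →
      ∀ α : ℝ, 1 < α →
      ∀ (x₀ : EuclideanSpace ℝ (Fin n)) (t₀ r : ℝ), 0 < r →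
      ∀ (J : Type) (zf : J → EuclideanSpace ℝ (Fin n) × ℝ) (ρf : J → ℝ)
        (qlow : ℝ) (αf : J → ℝ),
        qlow = sInf (q '' ((Metric.ball x₀ (4 * r)) ×ˢ
            Set.Ioo (t₀ - 16 * r ^ 2) (t₀ + 16 * r ^ 2))) →
        (∀ j, αf j = α ^ (qlow / q (zf j))) →
        (∀ j, 0 < ρf j) →
        (∀ j, intrinsicCyl n p d (αf j) (ρf j) (zf j)
            ⊆ (Metric.ball x₀ (2 * r)) ×ˢ Set.Ioo (t₀ - 4 * r ^ 2) (t₀ + 4 * r ^ 2)) →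
        (∀ j, (αf j) ^ (sSup (p '' intrinsicCyl n p d (αf j) (ρf j) (zf j))
              - sInf (p '' intrinsicCyl n p d (αf j) (ρf j) (zf j))) ≤ cp) →
        (∀ j, (αf j) ^ (sSup (q '' intrinsicCyl n p d (αf j) (ρf j) (zf j))
              - sInf (q '' intrinsicCyl n p d (αf j) (ρf j) (zf j))) ≤ cq) →
        ∃ I : Set J, I.Countable ∧
          (I.PairwiseDisjoint fun i => intrinsicCyl n p d (αf i) (ρf i) (zf i)) ∧
          (⋃ j, intrinsicCyl n p d (αf j) (ρf j) (zf j))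
            ⊆ ⋃ i ∈ I, intrinsicCyl n p d (αf i) (χ * ρf i) (zf i) := by
  have hn1 : (1:ℝ) ≤ n := by exact_mod_cast hn
  have hpm0 : 0 < pm := lt_of_le_of_lt (by positivity) hpm
  have hqm0 : 0 < qm := by linarith
  have hd0 : 0 < d :=
    lt_of_le_of_lt (div_nonneg (by positivity) (mul_nonneg (by positivity) hpm0.le)) hd1
  have hd1' : d < 1 := lt_of_lt_of_le hd2 (min_le_right _ _)
  have h1pm : 0 < 1/pm := one_div_pos.2 hpm0
  -- the constants
  set A : ℝ := (cq * cq ^ (qM/qm)) ^ (1/qm) with hA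
  have hcqM : 1 ≤ cq ^ (qM/qm) :=
    Real.one_le_rpow hcq.le (div_nonneg (by linarith) hqm0.le)
  have hA1 : 1 ≤ A := Real.one_le_rpow (by nlinarith) (by positivity)
  have hApm : 1 ≤ A ^ (pM - pm) := Real.one_le_rpow hA1 (by linarith)
  set C : ℝ := ((A ^ (pM - pm) * cp) * cp) ^ (1/(pm*pm)) with hC
  have hpm2 : 0 < pm * pm := mul_pos hpm0 hpm0
  have hC1 : 1 ≤ C := by
    have hstep : 1 ≤ A ^ (pM - pm) * cp := by nlinarith
    exact Real.one_le_rpow (by nlinarith) (le_of_lt (one_div_pos.2 hpm2))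
  set E : ℝ := 1 + 1/pm with hE
  have hE1 : 1 ≤ E := by rw [hE]; linarith
  have hAE1 : 1 ≤ A ^ E := Real.one_le_rpow hA1 (by linarith)
  set K : ℝ := 2 * (C * A ^ E) with hK
  have hK1 : 1 ≤ K := by nlinarith
  set L : ℝ := A ^ E * K ^ 2 with hL
  have hL1 : 1 ≤ L := by nlinarith [sq_nonneg K, sq_nonneg (K - 1)]
  refine ⟨5 + 2*L, by linarith, ?_⟩
  intro p q hp hq α hα x₀ t₀ r hr J zf ρf qlow αf hqlow hαf hρ hsub hocp hocq
  have hα0 : (0:ℝ) < α := by linarith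
  have hqpos : ∀ z, 0 < q z := fun z => lt_of_lt_of_le (by linarith) (hq z).1
  have hppos : ∀ z, 0 < p z := fun z => lt_of_lt_of_le hpm0 (hp z).1
  -- qlow is positive
  have hcenter : ((x₀, t₀) : EuclideanSpace ℝ (Fin n) × ℝ) ∈ (Metric.ball x₀ (4*r)) ×ˢ
      Set.Ioo (t₀ - 16*r^2) (t₀ + 16*r^2) :=
    Set.mk_mem_prod (mem_ball_self (by positivity))
      (Set.mem_Ioo.2 ⟨by nlinarith, by nlinarith⟩)
  have hqlow_pos : 0 < qlow := by
    have : qm ≤ qlow := by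
      rw [hqlow]
      exact le_csInf ⟨_, mem_image_of_mem q hcenter⟩ (by rintro b ⟨w, -, rfl⟩; exact (hq w).1)
    linarith
  have hαf1 : ∀ j, 1 < αf j := fun j => by
    rw [hαf]
    exact (Real.one_lt_rpow_iff_of_pos hα0).2 (Or.inl ⟨hα, div_pos hqlow_pos (hqpos _)⟩)
  have hαfpos : ∀ j, 0 < αf j := fun j => lt_trans one_pos (hαf1 j)
  -- abbreviations
  let Q : J → Set (EuclideanSpace ℝ (Fin n) × ℝ) :=
    fun j => intrinsicCyl n p d (αf j) (ρf j) (zf j)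
  let Rr : J → ℝ := fun j => αf j ^ (d/2 - 1/(p (zf j))) * ρf j
  let Tt : J → ℝ := fun j => αf j ^ (d - 1) * (ρf j) ^ 2
  have hQ_eq : ∀ j, Q j = (Metric.ball (zf j).1 (Rr j)) ×ˢ
      (Set.Ioo ((zf j).2 - Tt j) ((zf j).2 + Tt j)) := fun j => rfl
  have hRpos : ∀ j, 0 < Rr j := fun j => mul_pos (Real.rpow_pos_of_pos (hαfpos j) _) (hρ j)
  have hTpos : ∀ j, 0 < Tt j := fun j => mul_pos (Real.rpow_pos_of_pos (hαfpos j) _)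
    (pow_pos (hρ j) 2)
  have hzQ : ∀ j, zf j ∈ Q j := by
    intro j
    rw [hQ_eq j]
    exact Set.mem_prod.2 ⟨mem_ball_self (hRpos j),
      Set.mem_Ioo.2 ⟨by linarith [hTpos j], by linarith [hTpos j]⟩⟩
  have hQopen : ∀ j, IsOpen (Q j) := fun j => by
    rw [hQ_eq]; exact isOpen_ball.prod isOpen_Ioo
  -- oscillation facts
  have hosc : ∀ (f : EuclideanSpace ℝ (Fin n) × ℝ → ℝ) (fm fM : ℝ),
      (∀ z, fm ≤ f z ∧ f z ≤ fM) → ∀ j, ∀ w ∈ Q j, ∀ v ∈ Q j,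
      f w - f v ≤ sSup (f '' Q j) - sInf (f '' Q j) := by
    intro f fm fM hf j w hw v hv
    have bA : BddAbove (f '' Q j) := ⟨fM, by rintro b ⟨z, -, rfl⟩; exact (hf z).2⟩
    have bB : BddBelow (f '' Q j) := ⟨fm, by rintro b ⟨z, -, rfl⟩; exact (hf z).1⟩
    have h1 := le_csSup bA (mem_image_of_mem f hw)
    have h2 := csInf_le bB (mem_image_of_mem f hv)
    linarith
  have hosc0 : ∀ (f : EuclideanSpace ℝ (Fin n) × ℝ → ℝ) (fm fM : ℝ),
      (∀ z, fm ≤ f z ∧ f z ≤ fM) → ∀ j, 0 ≤ sSup (f '' Q j) - sInf (f '' Q j) := by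
    intro f fm fM hf j
    have := hosc f fm fM hf j (zf j) (hzQ j) (zf j) (hzQ j)
    linarith
  have hoscle : ∀ (f : EuclideanSpace ℝ (Fin n) × ℝ → ℝ) (fm fM : ℝ),
      (∀ z, fm ≤ f z ∧ f z ≤ fM) → ∀ j, sSup (f '' Q j) - sInf (f '' Q j) ≤ fM - fm := by
    intro f fm fM hf j
    have hne : (f '' Q j).Nonempty := ⟨f (zf j), mem_image_of_mem f (hzQ j)⟩
    have h1 : sSup (f '' Q j) ≤ fM := csSup_le hne (by rintro b ⟨z, -, rfl⟩; exact (hf z).2)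
    have h2 : fm ≤ sInf (f '' Q j) := le_csInf hne (by rintro b ⟨z, -, rfl⟩; exact (hf z).1)
    linarith
  -- the oscillation hypotheses, restated
  have hocp' : ∀ j, (αf j) ^ (sSup (p '' Q j) - sInf (p '' Q j)) ≤ cp := hocp
  have hocq' : ∀ j, (αf j) ^ (sSup (q '' Q j) - sInf (q '' Q j)) ≤ cq := hocq
  -- Claim 1 : comparability of the scaling factors of intersecting cylinders
  have hrat : ∀ i j, (Q i ∩ Q j).Nonempty → αf i ≤ A * αf j := by
    rintro i j ⟨w, hwi, hwj⟩
    have hqi := hqpos (zf i); have hqj := hqpos (zf j)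
    have hu0 : 0 < qlow / q (zf i) := div_pos hqlow_pos hqi
    have hv0 : 0 < qlow / q (zf j) := div_pos hqlow_pos hqj
    have hoi0 : 0 ≤ sSup (q '' Q i) - sInf (q '' Q i) := hosc0 q qm qM hq i
    have hoj0 : 0 ≤ sSup (q '' Q j) - sInf (q '' Q j) := hosc0 q qm qM hq j
    set u := qlow / q (zf i) with hu
    set v := qlow / q (zf j) with hv
    set oi := sSup (q '' Q i) - sInf (q '' Q i) with hoi
    set oj := sSup (q '' Q j) - sInf (q '' Q j) with hoj
    have hba : q (zf j) - q (zf i) ≤ oi + oj := by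
      have h1 := hosc q qm qM hq i w hwi (zf i) (hzQ i)
      have h2 := hosc q qm qM hq j (zf j) (hzQ j) w hwj
      rw [hoi, hoj]; linarith
    have e1 : u - v ≤ (u * oi + u * oj) / qm := by
      have h2 : u - v = u / q (zf j) * (q (zf j) - q (zf i)) := by
        rw [hu, hv]; field_simp
      have h3 : u / q (zf j) * (q (zf j) - q (zf i)) ≤ u / q (zf j) * (oi + oj) :=
        mul_le_mul_of_nonneg_left hba (div_nonneg hu0.le hqj.le)
      have h4 : u / q (zf j) * (oi + oj) ≤ (u * oi + u * oj) / qm := by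
        rw [div_mul_eq_mul_div, div_le_div_iff₀ hqj hqm0]
        have hqmj : qm ≤ q (zf j) := (hq _).1
        have h5 : u * (oi + oj) * qm ≤ u * (oi + oj) * q (zf j) :=
          mul_le_mul_of_nonneg_left hqmj (mul_nonneg hu0.le (by linarith))
        exact h5.trans_eq (by ring)
      linarith
    have estep : αf i / αf j ≤ α ^ ((u * oi + u * oj) / qm) := by
      rw [hαf i, hαf j, ← hu, ← hv, ← Real.rpow_sub hα0]
      exact Real.rpow_le_rpow_of_exponent_le hα.le e1
    have hsplit : α ^ ((u * oi + u * oj) / qm)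
        = (α ^ (u * oi) * α ^ (u * oj)) ^ (1/qm) := by
      rw [← Real.rpow_add hα0, ← Real.rpow_mul hα0.le, mul_one_div]
    have h5 : α ^ (u * oi) ≤ cq := by
      rw [Real.rpow_mul hα0.le]
      have h6 : (α ^ u) ^ oi = αf i ^ oi := by rw [hαf i, ← hu]
      rw [h6, hoi]; exact hocq' i
    have h6 : α ^ (u * oj) ≤ cq ^ (qM/qm) := by
      have huv : u * oj = (v * oj) * (u/v) := by field_simp
      rw [huv, Real.rpow_mul hα0.le]
      have h7 : α ^ (v * oj) ≤ cq := by
        rw [Real.rpow_mul hα0.le]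
        have h8 : (α ^ v) ^ oj = αf j ^ oj := by rw [hαf j, ← hv]
        rw [h8, hoj]; exact hocq' j
      have h8 : u / v ≤ qM / qm := by
        have huvq : u / v = q (zf j) / q (zf i) := by
          rw [hu, hv]; field_simp
        rw [huvq]
        exact div_le_div₀ (by linarith) (hq _).2 hqm0 (hq _).1
      calc (α ^ (v * oj)) ^ (u/v) ≤ cq ^ (u/v) :=
            Real.rpow_le_rpow (Real.rpow_nonneg hα0.le _) h7 (div_nonneg hu0.le hv0.le)
        _ ≤ cq ^ (qM/qm) := Real.rpow_le_rpow_of_exponent_le hcq.le h8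
    have h9 : (α ^ (u * oi) * α ^ (u * oj)) ^ (1/qm) ≤ (cq * cq ^ (qM/qm)) ^ (1/qm) :=
      Real.rpow_le_rpow
        (mul_nonneg (Real.rpow_nonneg hα0.le _) (Real.rpow_nonneg hα0.le _))
        (mul_le_mul h5 h6 (Real.rpow_nonneg hα0.le _) (by linarith))
        (le_of_lt (one_div_pos.2 hqm0))
    have hfin : αf i / αf j ≤ A := by
      rw [hA]
      calc αf i / αf j ≤ α ^ ((u * oi + u * oj) / qm) := estep
        _ = (α ^ (u * oi) * α ^ (u * oj)) ^ (1/qm) := hsplit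
        _ ≤ (cq * cq ^ (qM/qm)) ^ (1/qm) := h9
    have := (div_le_iff₀ (hαfpos j)).1 hfin
    linarith [this, mul_comm A (αf j)]
  -- Claim 2
  have hPC : ∀ i j, (Q i ∩ Q j).Nonempty →
      αf j ^ (1/(p (zf i)) - 1/(p (zf j))) ≤ C := by
    rintro i j ⟨w, hwi, hwj⟩
    have hpi := hppos (zf i); have hpj := hppos (zf j)
    have hoi0 : 0 ≤ sSup (p '' Q i) - sInf (p '' Q i) := hosc0 p pm pM hp i
    have hoj0 : 0 ≤ sSup (p '' Q j) - sInf (p '' Q j) := hosc0 p pm pM hp j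
    have hoiM : sSup (p '' Q i) - sInf (p '' Q i) ≤ pM - pm := hoscle p pm pM hp i
    set oi := sSup (p '' Q i) - sInf (p '' Q i) with hoi
    set oj := sSup (p '' Q j) - sInf (p '' Q j) with hoj
    have hnum : p (zf j) - p (zf i) ≤ oi + oj := by
      have h1 := hosc p pm pM hp i w hwi (zf i) (hzQ i)
      have h2 := hosc p pm pM hp j (zf j) (hzQ j) w hwj
      rw [hoi, hoj]; linarith
    have hexp : 1/(p (zf i)) - 1/(p (zf j)) ≤ (oi + oj)/(pm*pm) := by
      have h2 : 1/(p (zf i)) - 1/(p (zf j))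
          = (p (zf j) - p (zf i))/(p (zf i) * p (zf j)) := by
        rw [div_sub_div _ _ hpi.ne' hpj.ne', one_mul, mul_one]
      rw [h2, div_le_div_iff₀ (mul_pos hpi hpj) hpm2]
      have t1 : (p (zf j) - p (zf i)) * (pm*pm) ≤ (oi+oj)*(pm*pm) :=
        mul_le_mul_of_nonneg_right hnum hpm2.le
      have t2 : (oi+oj)*(pm*pm) ≤ (oi+oj)*(p (zf i) * p (zf j)) :=
        mul_le_mul_of_nonneg_left
          (by nlinarith [(hp (zf i)).1, (hp (zf j)).1]) (by linarith)
      linarith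
    have h1 : αf j ^ (1/(p (zf i)) - 1/(p (zf j))) ≤ αf j ^ ((oi + oj)/(pm*pm)) :=
      Real.rpow_le_rpow_of_exponent_le (hαf1 j).le hexp
    have hsplit : αf j ^ ((oi+oj)/(pm*pm)) = (αf j ^ oi * αf j ^ oj) ^ (1/(pm*pm)) := by
      rw [← Real.rpow_add (hαfpos j), ← Real.rpow_mul (hαfpos j).le, mul_one_div]
    have h2 : αf j ^ oj ≤ cp := by rw [hoj]; exact hocp' j
    have h3 : αf j ^ oi ≤ A ^ (pM - pm) * cp := by
      have hji : αf j ≤ A * αf i := hrat j i ⟨w, hwj, hwi⟩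
      calc αf j ^ oi ≤ (A * αf i) ^ oi :=
            Real.rpow_le_rpow (hαfpos j).le hji hoi0
        _ = A ^ oi * αf i ^ oi := Real.mul_rpow (by linarith) (hαfpos i).le
        _ ≤ A ^ (pM - pm) * cp := by
            have hAi : A ^ oi ≤ A ^ (pM - pm) :=
              Real.rpow_le_rpow_of_exponent_le hA1 hoiM
            have hpi' : αf i ^ oi ≤ cp := by rw [hoi]; exact hocp' i
            exact mul_le_mul hAi hpi' (Real.rpow_nonneg (hαfpos i).le _)
              (Real.rpow_nonneg (by linarith) _)
    calc αf j ^ (1/(p (zf i)) - 1/(p (zf j))) ≤ αf j ^ ((oi + oj)/(pm*pm)) := h1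
      _ = (αf j ^ oi * αf j ^ oj) ^ (1/(pm*pm)) := hsplit
      _ ≤ ((A ^ (pM - pm) * cp) * cp) ^ (1/(pm*pm)) :=
          Real.rpow_le_rpow
            (mul_nonneg (Real.rpow_nonneg (hαfpos j).le _) (Real.rpow_nonneg (hαfpos j).le _))
            (mul_le_mul h3 h2 (Real.rpow_nonneg (hαfpos j).le _)
              (mul_nonneg (Real.rpow_nonneg (by linarith) _) (by linarith)))
            (le_of_lt (one_div_pos.2 hpm2))
      _ = C := hC.symm
  -- Claim 3 : comparability of the ρ's
  have hρK : ∀ i j, (Q i ∩ Q j).Nonempty → Rr i ≤ 2 * Rr j → ρf i ≤ K * ρf j := by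
    intro i j hint hRle
    have hint' : (Q j ∩ Q i).Nonempty := by
      obtain ⟨w, h1, h2⟩ := hint; exact ⟨w, h2, h1⟩
    have hx0 : 0 < αf j / αf i := div_pos (hαfpos j) (hαfpos i)
    have hxA : αf j / αf i ≤ A := (div_le_iff₀ (hαfpos i)).2 (by
      have := hrat j i hint'; linarith [mul_comm A (αf i)])
    have hxA' : (αf j / αf i)⁻¹ ≤ A := by
      rw [inv_div]
      exact (div_le_iff₀ (hαfpos j)).2 (by
        have := hrat i j hint; linarith [mul_comm A (αf j)])
    have h1pi : 1/(p (zf i)) ≤ 1/pm := one_div_le_one_div_of_le hpm0 (hp _).1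
    have h1pi0 : 0 < 1/(p (zf i)) := one_div_pos.2 (hppos _)
    have heiE : |d/2 - 1/(p (zf i))| ≤ E := by
      rw [abs_le, hE]; constructor <;> linarith
    have hratio : αf j ^ (d/2 - 1/(p (zf j))) ≤ (C * A ^ E) * αf i ^ (d/2 - 1/(p (zf i))) := by
      have hsum : d/2 - 1/(p (zf j))
          = (1/(p (zf i)) - 1/(p (zf j))) + (d/2 - 1/(p (zf i))) := by ring
      rw [hsum, Real.rpow_add (hαfpos j)]
      have k1 : αf j ^ (1/(p (zf i)) - 1/(p (zf j))) ≤ C := hPC i j hint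
      have k2 : αf j ^ (d/2 - 1/(p (zf i))) ≤ A ^ E * αf i ^ (d/2 - 1/(p (zf i))) := by
        have heq : αf j ^ (d/2 - 1/(p (zf i)))
            = (αf j / αf i) ^ (d/2 - 1/(p (zf i))) * αf i ^ (d/2 - 1/(p (zf i))) := by
          rw [← Real.mul_rpow (div_nonneg (hαfpos j).le (hαfpos i).le) (hαfpos i).le,
            div_mul_cancel₀ _ (ne_of_gt (hαfpos i))]
        rw [heq]
        exact mul_le_mul_of_nonneg_right (rpow_ratio_le hx0 hA1 hxA hxA' heiE)
          (Real.rpow_pos_of_pos (hαfpos i) _).le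
      calc αf j ^ (1/(p (zf i)) - 1/(p (zf j))) * αf j ^ (d/2 - 1/(p (zf i)))
          ≤ C * (A ^ E * αf i ^ (d/2 - 1/(p (zf i)))) :=
            mul_le_mul k1 k2 (Real.rpow_nonneg (hαfpos j).le _) (by linarith)
        _ = (C * A ^ E) * αf i ^ (d/2 - 1/(p (zf i))) := by ring
    have hei_pos : 0 < αf i ^ (d/2 - 1/(p (zf i))) := Real.rpow_pos_of_pos (hαfpos i) _
    have h1 : αf i ^ (d/2 - 1/(p (zf i))) * ρf i
        ≤ 2 * (αf j ^ (d/2 - 1/(p (zf j))) * ρf j) := hRle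
    have h2 : 2 * (αf j ^ (d/2 - 1/(p (zf j))) * ρf j)
        ≤ 2 * (((C * A ^ E) * αf i ^ (d/2 - 1/(p (zf i)))) * ρf j) := by
      have := mul_le_mul_of_nonneg_right hratio (hρ j).le
      linarith
    have h3 : αf i ^ (d/2 - 1/(p (zf i))) * ρf i
        ≤ αf i ^ (d/2 - 1/(p (zf i))) * (K * ρf j) := by
      calc αf i ^ (d/2 - 1/(p (zf i))) * ρf i
          ≤ 2 * (((C * A ^ E) * αf i ^ (d/2 - 1/(p (zf i)))) * ρf j) := h1.trans h2
        _ = αf i ^ (d/2 - 1/(p (zf i))) * (K * ρf j) := by rw [hK]; ring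
    exact (mul_le_mul_iff_right₀ hei_pos).1 h3
  -- Claim 4 : comparability of the time-lengths
  have hTL : ∀ i j, (Q i ∩ Q j).Nonempty → Rr i ≤ 2 * Rr j → Tt i ≤ L * Tt j := by
    intro i j hint hRle
    have hρij := hρK i j hint hRle
    have hint' : (Q j ∩ Q i).Nonempty := by
      obtain ⟨w, h1, h2⟩ := hint; exact ⟨w, h2, h1⟩
    have hx0 : 0 < αf i / αf j := div_pos (hαfpos i) (hαfpos j)
    have hxA : αf i / αf j ≤ A := (div_le_iff₀ (hαfpos j)).2 (by
      have := hrat i j hint; linarith [mul_comm A (αf j)])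
    have hxA' : (αf i / αf j)⁻¹ ≤ A := by
      rw [inv_div]
      exact (div_le_iff₀ (hαfpos i)).2 (by
        have := hrat j i hint'; linarith [mul_comm A (αf i)])
    have hdE : |d - 1| ≤ E := by
      rw [abs_le, hE]; constructor <;> linarith
    have h1 : (αf i / αf j) ^ (d-1) ≤ A ^ E := rpow_ratio_le hx0 hA1 hxA hxA' hdE
    have h2 : αf i ^ (d-1) ≤ A ^ E * αf j ^ (d-1) := by
      have heq : αf i ^ (d-1) = (αf i / αf j) ^ (d-1) * αf j ^ (d-1) := by
        rw [← Real.mul_rpow (div_nonneg (hαfpos i).le (hαfpos j).le) (hαfpos j).le,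
          div_mul_cancel₀ _ (ne_of_gt (hαfpos j))]
      rw [heq]
      exact mul_le_mul_of_nonneg_right h1 (Real.rpow_pos_of_pos (hαfpos j) _).le
    have h3 : ρf i ^ 2 ≤ (K * ρf j) ^ 2 := pow_le_pow_left₀ (hρ i).le hρij 2
    calc Tt i = αf i ^ (d-1) * ρf i ^ 2 := rfl
      _ ≤ (A ^ E * αf j ^ (d-1)) * ((K * ρf j) ^ 2) :=
          mul_le_mul h2 h3 (by positivity)
            (mul_nonneg (Real.rpow_nonneg (by linarith) _)
              (Real.rpow_nonneg (hαfpos j).le _))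
      _ = L * Tt j := by
          have hTtj : Tt j = αf j ^ (d-1) * ρf j ^ 2 := rfl
          rw [hL, hTtj]; ring
  -- uniform bound on the spatial radii
  have hRle4 : ∀ j, Rr j ≤ 4 * r := by
    intro j
    by_contra hcon
    push_neg at hcon
    have hzball : dist (zf j).1 x₀ < 2*r := mem_ball.1 (hsub j (hzQ j)).1
    have hmin : 4*r < min (Rr j) (5*r) := lt_min hcon (by linarith)
    set c := (4*r + min (Rr j) (5*r))/2 with hc
    have hc1 : 4*r < c := by rw [hc]; linarith
    have hc2 : c < Rr j := by
      have h1 := min_le_left (Rr j) (5*r)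
      rw [hc]; linarith
    set v : EuclideanSpace ℝ (Fin n) :=
      c • (EuclideanSpace.single (⟨0, hn⟩ : Fin n) (1:ℝ)) with hv
    have hnv : ‖v‖ = c := by
      rw [hv, norm_smul, EuclideanSpace.norm_single, norm_one, mul_one,
        Real.norm_eq_abs, abs_of_pos (by linarith : (0:ℝ) < c)]
    have hdistv : dist ((zf j).1 + v) (zf j).1 = c := by
      rw [dist_eq_norm, add_sub_cancel_left, hnv]
    have hyQ : (((zf j).1 + v, (zf j).2) : EuclideanSpace ℝ (Fin n) × ℝ) ∈ Q j := by
      rw [hQ_eq j]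
      exact Set.mk_mem_prod (mem_ball.2 (by rw [hdistv]; exact hc2))
        (Set.mem_Ioo.2 ⟨by linarith [hTpos j], by linarith [hTpos j]⟩)
    have h2 : dist ((zf j).1 + v) x₀ < 2*r := mem_ball.1 (hsub j hyQ).1
    have h3 := dist_triangle ((zf j).1 + v) x₀ (zf j).1
    rw [hdistv] at h3
    rw [dist_comm] at hzball
    linarith
  -- Vitali selection
  obtain ⟨u, -, hdisj, hcov⟩ :=
    Vitali.exists_disjoint_subfamily_covering_enlargement Q Set.univ Rr 2 one_lt_two
      (fun a _ => (hRpos a).le) (4*r) (fun a _ => hRle4 a)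
      (fun a _ => ⟨zf a, hzQ a⟩)
  refine ⟨u, hdisj.countable_of_isOpen (fun i _ => hQopen i) (fun i _ => ⟨zf i, hzQ i⟩),
    hdisj, ?_⟩
  intro y hy
  rw [Set.mem_iUnion] at hy
  obtain ⟨a, hya⟩ := hy
  obtain ⟨b, hbu, hab, hRab⟩ := hcov a (Set.mem_univ a)
  rw [Set.mem_iUnion₂]
  refine ⟨b, hbu, ?_⟩
  have hya' : y ∈ Q a := hya
  have hTab : Tt a ≤ L * Tt b := hTL a b hab hRab
  rw [hQ_eq a] at hya'
  obtain ⟨hy1, hy2⟩ := hya'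
  obtain ⟨w, hwa, hwb⟩ := hab
  rw [hQ_eq a] at hwa
  rw [hQ_eq b] at hwb
  obtain ⟨hwa1, hwa2⟩ := hwa
  obtain ⟨hwb1, hwb2⟩ := hwb
  rw [mem_ball] at hy1 hwa1 hwb1
  rw [Set.mem_Ioo] at hy2 hwa2 hwb2
  have hχ2 : (2*L + 1) * Tt b ≤ (5+2*L)^2 * Tt b :=
    mul_le_mul_of_nonneg_right (by nlinarith) (hTpos b).le
  refine Set.mem_prod.2 ⟨Metric.mem_ball.2 ?_, Set.mem_Ioo.2 ⟨?_, ?_⟩⟩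
  · -- spatial inclusion
    have key : αf b ^ (d/2 - 1/(p (zf b))) * ((5+2*L) * ρf b) = (5+2*L) * Rr b := by
      have hRrb : Rr b = αf b ^ (d/2 - 1/(p (zf b))) * ρf b := rfl
      rw [hRrb]; ring
    rw [key]
    have h4 := dist_triangle4 y.1 (zf a).1 w.1 (zf b).1
    rw [dist_comm (zf a).1 w.1] at h4
    nlinarith [hRpos b, hL1, mul_nonneg (by linarith : (0:ℝ) ≤ 2*L) (hRpos b).le]
  · -- time, lower bound
    have key : αf b ^ (d - 1) * ((5+2*L) * ρf b)^2 = (5+2*L)^2 * Tt b := by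
      have hTtb : Tt b = αf b ^ (d-1) * ρf b ^ 2 := rfl
      rw [hTtb]; ring
    rw [key]
    linarith [hy2.1, hwa2.1, hwa2.2, hwb2.1, hTab, hχ2]
  · have key : αf b ^ (d - 1) * ((5+2*L) * ρf b)^2 = (5+2*L)^2 * Tt b := by
      have hTtb : Tt b = αf b ^ (d-1) * ρf b ^ 2 := rfl
      rw [hTtb]; ring
    rw [key]
    linarith [hy2.2, hwa2.1, hwa2.2, hwb2.2, hTab, hχ2]
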